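/- Let R be a commutative ring and Γₙ the Laurent polynomial ring in n variables over R. For R-linear endomorphisms of Γₙ define dⱼ(φ) = φ − M_{zⱼ} ∘ φ ∘ M_{zⱼ⁻¹}; define hⱼ by hⱼ(ψ)(z^α) = Σ_{i=0}^{αⱼ−1} z^{i·eⱼ}·ψ(z^{α−i·eⱼ}) if αⱼ ≥ 0 and hⱼ(ψ)(z^α) = −Σ_{i=αⱼ}^{−1} z^{i·eⱼ}·ψ(z^{α−i·eⱼ}) if αⱼ < 0; and define Πⱼ by Πⱼ(φ)(z^α) = zⱼ^{αⱼ}·φ(z^{α−αⱼ·eⱼ}). Then for all R-linear φ, ψ and all j ≠ k in {1,…,n}: (i) dⱼ(hⱼ(ψ)) = ψ; (ii) hⱼ(dⱼ(φ)) = φ − Πⱼ(φ); (iii) hⱼ ∘ dₖ = dₖ ∘ hⱼ and dⱼ ∘ dₖ = dₖ ∘ dⱼ; (iv) Π₁(Π₂(⋯Πₙ(φ))) = M_{φ(1)}, multiplication by φ(1). -/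

import Mathlib

/-- The monomial `z^α` in the Laurent polynomial ring in `n` variables over `R`,
realised as the monoid algebra of `ℤⁿ` over `R`. -/
noncomputable def zmon {R : Type*} [CommRing R] {n : ℕ} (α : Fin n → ℤ) :
    AddMonoidAlgebra R (Fin n → ℤ) :=
  AddMonoidAlgebra.single α 1

/-- The operator `dⱼ(φ) = φ − M_{zⱼ} ∘ φ ∘ M_{zⱼ⁻¹}` on `R`-linear endomorphisms of the
Laurent polynomial ring in `n` variables. -/
noncomputable def torusDiff (R : Type*) [CommRing R] (n : ℕ) (j : Fin n)
    (φ : AddMonoidAlgebra R (Fin n → ℤ) →ₗ[R] AddMonoidAlgebra R (Fin n → ℤ)) :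
    AddMonoidAlgebra R (Fin n → ℤ) →ₗ[R] AddMonoidAlgebra R (Fin n → ℤ) :=
  φ - (LinearMap.mulLeft R (zmon (Pi.single j 1))) ∘ₗ φ ∘ₗ
    (LinearMap.mulLeft R (zmon (-(Pi.single j 1))))

section helpers
variable {R : Type*} [CommRing R] {n : ℕ}

lemma zmon_mul (α β : Fin n → ℤ) :
    (zmon α : AddMonoidAlgebra R (Fin n → ℤ)) * zmon β = zmon (α + β) := by
  simp [zmon, AddMonoidAlgebra.single_mul_single]

lemma zmon_zero : (zmon 0 : AddMonoidAlgebra R (Fin n → ℤ)) = 1 := rfl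

lemma zmon_lhom_ext {f g : AddMonoidAlgebra R (Fin n → ℤ) →ₗ[R] AddMonoidAlgebra R (Fin n → ℤ)}
    (h : ∀ α, f (zmon α) = g (zmon α)) : f = g := by
  apply AddMonoidAlgebra.lhom_ext'
  intro a
  apply LinearMap.ext_ring
  exact h a

lemma torusDiff_zmon (j : Fin n)
    (φ : AddMonoidAlgebra R (Fin n → ℤ) →ₗ[R] AddMonoidAlgebra R (Fin n → ℤ))
    (α : Fin n → ℤ) :
    torusDiff R n j φ (zmon α)
      = φ (zmon α) - zmon (Pi.single j 1) * φ (zmon (α - Pi.single j 1)) := by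
  have : (-(Pi.single j 1) + α : Fin n → ℤ) = α - Pi.single j 1 := by
    rw [neg_add_eq_sub]
  simp [torusDiff, LinearMap.sub_apply, LinearMap.comp_apply, LinearMap.mulLeft_apply,
    zmon_mul, this]

/-- signed sum over `[0,a)` resp. `-[a,0)`. -/
noncomputable def sgnSum {M : Type*} [AddCommGroup M] (a : ℤ) (f : ℤ → M) : M :=
  if 0 ≤ a then ∑ i ∈ Finset.Ico (0:ℤ) a, f i else -∑ i ∈ Finset.Ico a (0:ℤ), f i

lemma Icc_neg_one (a : ℤ) : Finset.Icc a (-1:ℤ) = Finset.Ico a 0 := by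
  ext x; simp; omega

lemma sum_Ico_split {M : Type*} [AddCommGroup M] (f : ℤ → M) {a b c : ℤ}
    (hab : a ≤ b) (hbc : b ≤ c) :
    ∑ i ∈ Finset.Ico a c, f i = (∑ i ∈ Finset.Ico a b, f i) + ∑ i ∈ Finset.Ico b c, f i := by
  rw [← Finset.sum_union (Finset.Ico_disjoint_Ico_consecutive a b c),
    Finset.Ico_union_Ico_eq_Ico hab hbc]

lemma sgnSum_sub_shift {M : Type*} [AddCommGroup M] (a : ℤ) (f : ℤ → M) :
    sgnSum a f - sgnSum (a - 1) (fun i => f (i + 1)) = f 0 := by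
  have hsh : ∀ u v : ℤ, (∑ i ∈ Finset.Ico u v, f (i + 1))
      = ∑ i ∈ Finset.Ico (u+1) (v+1), f i := fun u v => Finset.sum_Ico_add' f u v 1
  rcases lt_trichotomy a 0 with h | h | h
  · rw [sgnSum, sgnSum, if_neg (by omega), if_neg (by omega), hsh]
    have : (a - 1 + 1 : ℤ) = a := by ring
    rw [this]
    rw [sum_Ico_split f (le_of_lt h) (by omega : (0:ℤ) ≤ 0 + 1)]
    have : Finset.Ico (0:ℤ) (0+1) = {0} := by ext x; simp; omega
    rw [this, Finset.sum_singleton]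
    abel
  · subst h
    rw [sgnSum, sgnSum, if_pos le_rfl, if_neg (by omega), hsh]
    have h1 : Finset.Ico (0:ℤ) 0 = ∅ := Finset.Ico_self 0
    have h2 : Finset.Ico (0 - 1 + 1 : ℤ) (0+1) = {0} := by ext x; simp; omega
    rw [h1, h2, Finset.sum_empty, Finset.sum_singleton]
    abel
  · rw [sgnSum, sgnSum, if_pos (le_of_lt h), if_pos (by omega : (0:ℤ) ≤ a - 1), hsh]
    have ha : (a - 1 + 1 : ℤ) = a := by ring
    rw [ha]
    rw [sum_Ico_split f (by omega : (0:ℤ) ≤ 0+1) (by omega : (0+1:ℤ) ≤ a)]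
    have : Finset.Ico (0:ℤ) (0+1) = {0} := by ext x; simp; omega
    rw [this, Finset.sum_singleton]
    abel

lemma sum_Ico_telescope {M : Type*} [AddCommGroup M] (f : ℤ → M) {a b : ℤ} (h : a ≤ b) :
    ∑ i ∈ Finset.Ico a b, (f i - f (i + 1)) = f a - f b := by
  rw [Int.Ico_eq_finset_map, Finset.sum_map]
  simp only [Function.Embedding.trans_apply, Nat.castEmbedding_apply, addLeftEmbedding_apply]
  have key := Finset.sum_range_sub' (fun i : ℕ => f (a + i)) (b - a).toNat
  simp only [Nat.cast_add, Nat.cast_one, ← add_assoc] at key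
  rw [key, Nat.cast_zero, add_zero, Int.toNat_of_nonneg (sub_nonneg.2 h), add_sub_cancel]

lemma sgnSum_telescope {M : Type*} [AddCommGroup M] (a : ℤ) (f : ℤ → M) :
    sgnSum a (fun i => f i - f (i + 1)) = f 0 - f a := by
  rcases le_or_gt 0 a with h | h
  · rw [sgnSum, if_pos h, sum_Ico_telescope f h]
  · rw [sgnSum, if_neg (not_le.2 h), sum_Ico_telescope f (le_of_lt h)]
    abel

lemma sgnSum_sub {M : Type*} [AddCommGroup M] (a : ℤ) (f g : ℤ → M) :
    sgnSum a (fun i => f i - g i) = sgnSum a f - sgnSum a g := by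
  unfold sgnSum; split <;> simp [Finset.sum_sub_distrib] <;> abel

lemma sgnSum_mul {M : Type*} [Ring M] (a : ℤ) (c : M) (f : ℤ → M) :
    sgnSum a (fun i => c * f i) = c * sgnSum a f := by
  unfold sgnSum; split <;> simp [Finset.mul_sum]

lemma sgnSum_congr {M : Type*} [AddCommGroup M] (a : ℤ) {f g : ℤ → M}
    (h : ∀ i, f i = g i) : sgnSum a f = sgnSum a g := by
  have : f = g := funext h
  rw [this]

end helpers

/-- Componentwise identities for the Koszul-type homotopy on the `n`-torus: with
`dⱼ(φ) = φ − M_{zⱼ} ∘ φ ∘ M_{zⱼ⁻¹}`, `hⱼ` determined on monomials by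
`hⱼ(ψ)(z^α) = Σ_{i=0}^{αⱼ−1} z^{i·eⱼ}·ψ(z^{α−i·eⱼ})` for `αⱼ ≥ 0` and
`hⱼ(ψ)(z^α) = −Σ_{i=αⱼ}^{−1} z^{i·eⱼ}·ψ(z^{α−i·eⱼ})` for `αⱼ < 0`, and `Πⱼ` determined by
`Πⱼ(φ)(z^α) = zⱼ^{αⱼ}·φ(z^{α−αⱼ·eⱼ})`, one has for all `φ`, `ψ` and `j ≠ k`:
(i) `dⱼ(hⱼ(ψ)) = ψ`; (ii) `hⱼ(dⱼ(φ)) = φ − Πⱼ(φ)`; (iii) `hⱼ ∘ dₖ = dₖ ∘ hⱼ` and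
`dⱼ ∘ dₖ = dₖ ∘ dⱼ`; (iv) `Π₁(Π₂(⋯Πₙ(φ))) = M_{φ(1)}`. -/

theorem torus_koszul_homotopy_identities (R : Type*) [CommRing R] (n : ℕ)
    (hop Pio : Fin n →
      (AddMonoidAlgebra R (Fin n → ℤ) →ₗ[R] AddMonoidAlgebra R (Fin n → ℤ)) →
      (AddMonoidAlgebra R (Fin n → ℤ) →ₗ[R] AddMonoidAlgebra R (Fin n → ℤ)))
    (h_nonneg : ∀ (j : Fin n) ψ (α : Fin n → ℤ), 0 ≤ α j →
      hop j ψ (zmon α) =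
        ∑ i ∈ Finset.Ico (0 : ℤ) (α j), zmon (Pi.single j i) * ψ (zmon (α - Pi.single j i)))
    (h_neg : ∀ (j : Fin n) ψ (α : Fin n → ℤ), α j < 0 →
      hop j ψ (zmon α) =
        -∑ i ∈ Finset.Icc (α j) (-1 : ℤ), zmon (Pi.single j i) * ψ (zmon (α - Pi.single j i)))
    (h_Pi : ∀ (j : Fin n) φ (α : Fin n → ℤ),
      Pio j φ (zmon α) = zmon (Pi.single j (α j)) * φ (zmon (α - Pi.single j (α j)))) :
    (∀ (j : Fin n) ψ, torusDiff R n j (hop j ψ) = ψ) ∧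
    (∀ (j : Fin n) φ, hop j (torusDiff R n j φ) = φ - Pio j φ) ∧
    (∀ j k : Fin n, j ≠ k →
      (∀ φ, hop j (torusDiff R n k φ) = torusDiff R n k (hop j φ)) ∧
      (∀ φ, torusDiff R n j (torusDiff R n k φ) = torusDiff R n k (torusDiff R n j φ))) ∧
    (∀ φ, (List.ofFn fun j : Fin n => Pio j).foldr (· ∘ ·) id φ =
      LinearMap.mulLeft R (φ (1 : AddMonoidAlgebra R (Fin n → ℤ)))) := by
  have hopz : ∀ (j : Fin n) ψ (α : Fin n → ℤ),
      hop j ψ (zmon α)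
        = sgnSum (α j) (fun i => zmon (Pi.single j i) * ψ (zmon (α - Pi.single j i))) := by
    intro j ψ α
    rcases le_or_gt 0 (α j) with h | h
    · rw [h_nonneg j ψ α h, sgnSum, if_pos h]
    · rw [h_neg j ψ α h, sgnSum, if_neg (not_le.2 h), Icc_neg_one]
  refine ⟨?_, ?_, ?_, ?_⟩
  · -- (i) dⱼ(hⱼ(ψ)) = ψ
    intro j ψ
    apply zmon_lhom_ext
    intro α
    rw [torusDiff_zmon, hopz j ψ α, hopz j ψ (α - Pi.single j 1)]
    have hα : (α - Pi.single j 1 : Fin n → ℤ) j = α j - 1 := by simp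
    rw [hα, ← sgnSum_mul]
    have hfun : (fun i => zmon (Pi.single j 1) *
          (zmon (Pi.single j i) * ψ (zmon (α - Pi.single j 1 - Pi.single j i))))
        = fun i => (fun i' => zmon (Pi.single j i') * ψ (zmon (α - Pi.single j i'))) (i + 1) := by
      funext i
      rw [← mul_assoc, zmon_mul, ← Pi.single_add, add_comm (1:ℤ) i,
        sub_sub, ← Pi.single_add, add_comm (1:ℤ) i]
    rw [hfun, sgnSum_sub_shift]
    simp [zmon_zero]
  · -- (ii) hⱼ(dⱼ(φ)) = φ − Πⱼ(φ)
    intro j φ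
    apply zmon_lhom_ext
    intro α
    rw [LinearMap.sub_apply, hopz, h_Pi]
    have hfun : (fun i => zmon (Pi.single j i) * torusDiff R n j φ (zmon (α - Pi.single j i)))
        = fun i => (fun i' => zmon (Pi.single j i') * φ (zmon (α - Pi.single j i'))) i
            - (fun i' => zmon (Pi.single j i') * φ (zmon (α - Pi.single j i'))) (i + 1) := by
      funext i
      simp only []
      rw [torusDiff_zmon, mul_sub, ← mul_assoc, zmon_mul, ← Pi.single_add, sub_sub,
        ← Pi.single_add]
    rw [hfun, sgnSum_telescope]
    simp [zmon_zero]
  · -- (iii)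
    intro j k hjk
    have hsk : (Pi.single k 1 : Fin n → ℤ) j = 0 := Pi.single_eq_of_ne hjk 1
    constructor
    · intro φ
      apply zmon_lhom_ext
      intro α
      rw [hopz, torusDiff_zmon, hopz, hopz]
      have hα : (α - Pi.single k 1 : Fin n → ℤ) j = α j := by simp [hsk]
      rw [hα, ← sgnSum_mul, ← sgnSum_sub]
      apply sgnSum_congr
      intro i
      rw [torusDiff_zmon, mul_sub, mul_left_comm, sub_right_comm α (Pi.single j i)]
    · intro φ
      apply zmon_lhom_ext
      intro α
      simp only [torusDiff_zmon, map_sub, mul_sub]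
      rw [mul_left_comm (zmon (Pi.single j 1)) (zmon (Pi.single k 1)),
        sub_right_comm α (Pi.single j 1) (Pi.single k 1)]
      abel
  · -- (iv)
    have key : ∀ (l : List (Fin n)), l.Nodup → ∀ φ (α : Fin n → ℤ),
        ((l.map (fun j => Pio j)).foldr (· ∘ ·) id φ) (zmon α)
          = zmon (fun k => if k ∈ l then α k else 0)
              * φ (zmon (α - fun k => if k ∈ l then α k else 0)) := by
      intro l
      induction l with
      | nil =>
          intro _ φ α
          have h0 : (fun k : Fin n => if k ∈ ([] : List (Fin n)) then α k else 0) = 0 := by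
            funext k; simp
          simp only [List.map_nil, List.foldr_nil, id_eq, h0, sub_zero, zmon_zero, one_mul]
      | cons j t ih =>
          intro hnd φ α
          have hj : j ∉ t := (List.nodup_cons.1 hnd).1
          have ht : t.Nodup := (List.nodup_cons.1 hnd).2
          simp only [List.map_cons, List.foldr_cons, Function.comp_apply]
          rw [h_Pi]
          have IH := ih ht φ (α - Pi.single j (α j))
          rw [IH]
          have hm2 : (fun k => if k ∈ t then (α - Pi.single j (α j) : Fin n → ℤ) k else 0)
              = (fun k => if k ∈ t then α k else 0) := by
            funext k
            by_cases hk : k ∈ t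
            · have hkj : k ≠ j := fun h => hj (h ▸ hk)
              simp [hk, Pi.sub_apply, Pi.single_eq_of_ne hkj]
            · simp [hk]
          rw [hm2]
          have hb : Pi.single j (α j) + (fun k => if k ∈ t then α k else 0)
              = fun k => if k ∈ (j :: t) then α k else 0 := by
            funext k
            by_cases hk : k = j
            · subst hk
              simp [hj]
            · simp [Pi.single_eq_of_ne hk, List.mem_cons, hk]
          have hc : α - Pi.single j (α j) - (fun k => if k ∈ t then α k else 0)
              = α - fun k => if k ∈ (j :: t) then α k else 0 := by
            rw [sub_sub, hb]
          rw [← mul_assoc, zmon_mul, hb, hc]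
    intro φ
    apply zmon_lhom_ext
    intro α
    rw [List.ofFn_eq_map, key (List.finRange n) (List.nodup_finRange n) φ α]
    have hmask : (fun k => if k ∈ List.finRange n then α k else 0) = α := by
      funext k; simp [List.mem_finRange]
    rw [hmask, sub_self, zmon_zero, LinearMap.mulLeft_apply, mul_comm]
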